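/- For a spinor φ on the hypersurface spinor bundle, the identity g(ρ U_φ, X) = g(u_φ j^♯, X) holds for all tangent vectors X, provided (ρ e₀ − j^♯)·φ = 0; i.e. ρ U_φ = u_φ j^♯. -/

import Mathlib

/-- In the hypersurface spinor module, if `(ρe₀ − j♯)·φ = 0`, then
`g(ρ U_φ, X) = g(u_φ j♯, X)` for all tangent vectors `X`, i.e.
`ρ U_φ = u_φ j♯`, where `U_φ` is defined by `g(U_φ, X) = Re⟨e₀·X·φ, φ⟩` and
`u_φ = ‖φ‖²`. -/
theorem stmt16 (n : ℕ) (S : Type*) [NormedAddCommGroup S] [InnerProductSpace ℂ S]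
    (c : EuclideanSpace ℝ (Fin n) → Module.End ℂ S) (A : Module.End ℂ S)
    (hadd : ∀ X Y, c (X + Y) = c X + c Y)
    (hAsa : ∀ v w, (inner ℂ (A v) w : ℂ) = inner ℂ v (A w))
    (hskew : ∀ X v w, (inner ℂ (c X v) w : ℂ) = -inner ℂ v (c X w))
    (hanti : ∀ X v, A (c X v) = -c X (A v))
    (hcliff : ∀ X v, c X (c X v) = -((‖X‖ : ℂ) ^ 2) • v)
    (φ : S) (U : EuclideanSpace ℝ (Fin n)) (u : ℝ)
    (hu : u = ‖φ‖ ^ 2)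
    (hU : ∀ X, (inner ℝ U X : ℝ) = (inner ℂ (A (c X φ)) φ : ℂ).re)
    (ρ : ℝ) (j : EuclideanSpace ℝ (Fin n))
    (h0 : (ρ : ℂ) • A φ - c j φ = 0) :
    ρ • U = u • j := by
  have hρA : (ρ : ℂ) • A φ = c j φ := sub_eq_zero.mp h0
  -- polarization of the Clifford relation
  have hpol : ∀ X : EuclideanSpace ℝ (Fin n),
      c X (c j φ) + c j (c X φ) = ((-(2 * (inner ℝ X j : ℝ)) : ℝ) : ℂ) • φ := by
    intro X
    have h1 := hcliff (X + j) φ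
    rw [hadd] at h1
    simp only [LinearMap.add_apply, map_add] at h1
    have hXX := hcliff X φ
    have hjj := hcliff j φ
    have hnormc : ((‖X + j‖ : ℂ)) ^ 2
        = (‖X‖ : ℂ) ^ 2 + ((2 * (inner ℝ X j : ℝ) : ℝ) : ℂ) + (‖j‖ : ℂ) ^ 2 := by
      have h' : ‖X + j‖ ^ 2 = ‖X‖ ^ 2 + 2 * (inner ℝ X j : ℝ) + ‖j‖ ^ 2 := by
        exact norm_add_sq_real X j
      exact_mod_cast congrArg (fun r : ℝ => (r : ℂ)) h'
    rw [hXX, hjj, hnormc] at h1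
    have h2 : c X (c j φ) + c j (c X φ)
        = -((‖X‖ : ℂ) ^ 2 + ((2 * (inner ℝ X j : ℝ) : ℝ) : ℂ) + (‖j‖ : ℂ) ^ 2) • φ
          - (-((‖X‖ : ℂ) ^ 2) • φ) - (-((‖j‖ : ℂ) ^ 2) • φ) := by
      rw [← h1]; abel
    rw [h2]
    push_cast
    module
  apply ext_inner_right ℝ
  intro X
  rw [real_inner_smul_left, real_inner_smul_left, hU X]
  have e1 : (ρ : ℂ) * (inner ℂ (A (c X φ)) φ : ℂ) = inner ℂ (c X φ) (c j φ) := by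
    rw [hAsa, ← inner_smul_right, hρA]
  have e2 : (inner ℂ (c X φ) (c j φ) : ℂ) + (inner ℂ (c j φ) (c X φ) : ℂ)
      = ((2 * (inner ℝ X j : ℝ) * ‖φ‖ ^ 2 : ℝ) : ℂ) := by
    rw [hskew X, hskew j, ← neg_add, ← inner_add_right, hpol X, inner_smul_right,
      inner_self_eq_norm_sq_to_K]
    push_cast
    ring_nf
    rfl
  have hconj : (starRingEnd ℂ) (inner ℂ (c X φ) (c j φ) : ℂ) = inner ℂ (c j φ) (c X φ) :=
    inner_conj_symm _ _
  have e3 : (inner ℂ (c X φ) (c j φ) : ℂ).re = (inner ℝ X j : ℝ) * ‖φ‖ ^ 2 := by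
    have h4 := congrArg Complex.re e2
    rw [Complex.add_re, ← hconj, Complex.conj_re, Complex.ofReal_re] at h4
    linarith
  calc ρ * (inner ℂ (A (c X φ)) φ : ℂ).re
      = ((ρ : ℂ) * (inner ℂ (A (c X φ)) φ : ℂ)).re := by
        rw [Complex.re_ofReal_mul]
    _ = (inner ℂ (c X φ) (c j φ) : ℂ).re := by rw [e1]
    _ = (inner ℝ X j : ℝ) * ‖φ‖ ^ 2 := e3
    _ = u * inner ℝ j X := by rw [hu, real_inner_comm]; ring
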